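/- Let α : B → C be a surjective non-unital k-algebra homomorphism and β, γ : C → B two k-linear maps with α∘β = α∘γ = id_C, with classifying maps ξ_β, ξ_γ : J(C) → ker α. Let Ū : TensorAlgebra k C → Polynomial (Unitization k B) be the unique k-algebra homomorphism with Ū(ι c) = C(inr(β c)) + C(inr(γ c − β c))·X for all c ∈ C. Then: (i) Polynomial.map (Unitization.map α) ∘ Ū = Polynomial.C ∘ η_C; (ii) evaluation at X = 0 composed with Ū equals γ_β, and evaluation at X = 1 composed with Ū equals γ_γ. Consequently, for every a ∈ J(C) all coefficients of Ū(a) lie in inr(ker α), and Ū realizes an elementary polynomial homotopy between the classifying maps ξ_β and ξ_γ; i.e. the classifying map of a k-split extension is unique up to elementary homotopy. -/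

import Mathlib

noncomputable section

namespace NUPolyAux

/-! Auxiliary constructions at the level of finitely supported functions. -/

variable {R : Type*} [NonUnitalRing R]

/-- Convolution product of coefficient sequences. -/
def mulF (p q : ℕ →₀ R) : ℕ →₀ R :=
  p.sum fun i a => q.sum fun j b => Finsupp.single (i + j) (a * b)

/-- Interpretation of a coefficient sequence as a polynomial over the
unitization of `R`. -/
def toPUF (p : ℕ →₀ R) : Polynomial (Unitization ℤ R) :=
  p.sum fun i a => Polynomial.monomial i (Unitization.inr a)

theorem toPUF_single (i : ℕ) (a : R) :
    toPUF (Finsupp.single i a) = Polynomial.monomial i (Unitization.inr a) := by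
  rw [toPUF, Finsupp.sum_single_index]
  simp

theorem coeff_toPUF (p : ℕ →₀ R) (n : ℕ) :
    (toPUF p).coeff n = Unitization.inr (p n) := by
  classical
  rw [toPUF, Finsupp.sum, Polynomial.finset_sum_coeff]
  simp only [Polynomial.coeff_monomial]
  rw [Finset.sum_ite_eq' p.support n fun i => Unitization.inr (p i)]
  split
  · rfl
  · next h => rw [Finsupp.notMem_support_iff.mp h, Unitization.inr_zero]

theorem toPUF_injective : Function.Injective (toPUF (R := R)) := by
  intro p q h
  ext n
  apply Unitization.inr_injective (R := ℤ)
  rw [← coeff_toPUF, ← coeff_toPUF, h]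

theorem toPUF_zero : toPUF (0 : ℕ →₀ R) = 0 := by
  refine Polynomial.ext fun n => ?_
  rw [coeff_toPUF, Finsupp.zero_apply, Unitization.inr_zero, Polynomial.coeff_zero]

theorem toPUF_add (p q : ℕ →₀ R) : toPUF (p + q) = toPUF p + toPUF q := by
  refine Polynomial.ext fun n => ?_
  rw [coeff_toPUF, Polynomial.coeff_add, coeff_toPUF, coeff_toPUF,
    Finsupp.add_apply, Unitization.inr_add]

/-- `toPUF` as an additive monoid homomorphism. -/
def toPUFHom : (ℕ →₀ R) →+ Polynomial (Unitization ℤ R) where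
  toFun := toPUF
  map_zero' := toPUF_zero
  map_add' := toPUF_add

@[simp] theorem toPUFHom_apply (p : ℕ →₀ R) : toPUFHom p = toPUF p := rfl

theorem toPUF_mulF (p q : ℕ →₀ R) : toPUF (mulF p q) = toPUF p * toPUF q := by
  classical
  have h1 : toPUF (mulF p q)
      = p.sum fun i a => q.sum fun j b =>
          Polynomial.monomial (i + j) (Unitization.inr (a * b)) := by
    rw [mulF, ← toPUFHom_apply, map_finsuppSum]
    refine Finsupp.sum_congr fun i _ => ?_
    rw [map_finsuppSum]
    exact Finsupp.sum_congr fun j _ => toPUF_single _ _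
  rw [h1, toPUF, toPUF, Finsupp.sum_mul]
  refine Finsupp.sum_congr fun i _ => ?_
  rw [Finsupp.mul_sum]
  refine Finsupp.sum_congr fun j _ => ?_
  rw [Polynomial.monomial_mul_monomial, Unitization.inr_mul]

end NUPolyAux

/-- The non-unital polynomial algebra `R[x]` over a non-unital ring `R`:
the type of finitely supported coefficient sequences (i.e. of
`AddMonoidAlgebra R ℕ`) equipped with the convolution product. -/
structure NUPoly (R : Type*) [NonUnitalRing R] where
  /-- the coefficient sequence of a non-unital polynomial -/
  toFinsupp : ℕ →₀ R

namespace NUPoly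

open NUPolyAux

variable {R : Type*} [NonUnitalRing R]

theorem toFinsupp_injective :
    Function.Injective (toFinsupp : NUPoly R → (ℕ →₀ R)) := by
  rintro ⟨p⟩ ⟨q⟩ h
  simpa using h

instance instZero : Zero (NUPoly R) := ⟨⟨0⟩⟩
instance instAdd : Add (NUPoly R) := ⟨fun p q => ⟨p.toFinsupp + q.toFinsupp⟩⟩
instance instNeg : Neg (NUPoly R) := ⟨fun p => ⟨-p.toFinsupp⟩⟩
instance instSub : Sub (NUPoly R) := ⟨fun p q => ⟨p.toFinsupp - q.toFinsupp⟩⟩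
instance instSMul {S : Type*} [SMulZeroClass S R] : SMul S (NUPoly R) :=
  ⟨fun c p => ⟨c • p.toFinsupp⟩⟩
instance instMul : Mul (NUPoly R) := ⟨fun p q => ⟨mulF p.toFinsupp q.toFinsupp⟩⟩

@[simp] theorem toFinsupp_zero : (0 : NUPoly R).toFinsupp = 0 := rfl
@[simp] theorem toFinsupp_add (p q : NUPoly R) :
    (p + q).toFinsupp = p.toFinsupp + q.toFinsupp := rfl
@[simp] theorem toFinsupp_smul {S : Type*} [SMulZeroClass S R] (c : S) (p : NUPoly R) :
    (c • p).toFinsupp = c • p.toFinsupp := rfl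
@[simp] theorem toFinsupp_mul (p q : NUPoly R) :
    (p * q).toFinsupp = mulF p.toFinsupp q.toFinsupp := rfl

instance instAddCommGroup : AddCommGroup (NUPoly R) :=
  toFinsupp_injective.addCommGroup toFinsupp rfl (fun _ _ => rfl) (fun _ => rfl)
    (fun _ _ => rfl) (fun _ _ => rfl) (fun _ _ => rfl)

/-- The interpretation of `p ∈ R[x]` as a polynomial over the unitization of `R`. -/
def toPU (p : NUPoly R) : Polynomial (Unitization ℤ R) := toPUF p.toFinsupp

theorem toPU_injective : Function.Injective (toPU (R := R)) :=
  fun _ _ h => toFinsupp_injective (toPUF_injective h)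

theorem toPU_zero : toPU (0 : NUPoly R) = 0 := toPUF_zero
theorem toPU_add (p q : NUPoly R) : toPU (p + q) = toPU p + toPU q := toPUF_add _ _
theorem toPU_mul (p q : NUPoly R) : toPU (p * q) = toPU p * toPU q := toPUF_mulF _ _

instance instNonUnitalRing : NonUnitalRing (NUPoly R) :=
  { instAddCommGroup, instMul with
    left_distrib := fun p q r => toPU_injective <| by
      rw [toPU_mul, toPU_add, toPU_add, toPU_mul, toPU_mul, mul_add]
    right_distrib := fun p q r => toPU_injective <| by
      rw [toPU_mul, toPU_add, toPU_add, toPU_mul, toPU_mul, add_mul]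
    zero_mul := fun p => toPU_injective <| by
      rw [toPU_mul, toPU_zero, zero_mul]
    mul_zero := fun p => toPU_injective <| by
      rw [toPU_mul, toPU_zero, mul_zero]
    mul_assoc := fun p q r => toPU_injective <| by
      rw [toPU_mul, toPU_mul, toPU_mul, toPU_mul, mul_assoc] }

theorem mul_def (p q : NUPoly R) :
    (p * q).toFinsupp
      = p.toFinsupp.sum fun i a => q.toFinsupp.sum fun j b =>
          Finsupp.single (i + j) (a * b) := rfl

theorem mul_apply (p q : NUPoly R) (n : ℕ) :
    (p * q).toFinsupp n = ∑ x ∈ Finset.HasAntidiagonal.antidiagonal n, p.toFinsupp x.1 * q.toFinsupp x.2 := by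
  apply Unitization.inr_injective (R := ℤ)
  have h : (Unitization.inr ((p * q).toFinsupp n) : Unitization ℤ R)
      = ∑ x ∈ Finset.HasAntidiagonal.antidiagonal n,
          (Unitization.inr (p.toFinsupp x.1) * Unitization.inr (q.toFinsupp x.2) :
            Unitization ℤ R) := by
    rw [← coeff_toPUF, ← toPU, toPU_mul, Polynomial.coeff_mul]
    exact Finset.sum_congr rfl fun x _ => by
      rw [toPU, toPU, coeff_toPUF, coeff_toPUF]
  rw [h]
  simp only [← Unitization.inr_mul]
  exact (map_sum (Unitization.inrHom ℤ ℤ R) (fun x => p.toFinsupp x.1 * q.toFinsupp x.2)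
    (Finset.HasAntidiagonal.antidiagonal n)).symm

section Module

variable {k : Type*} [Semiring k] [Module k R]

/-- `toFinsupp` as an additive monoid homomorphism. -/
def toFinsuppAddHom : NUPoly R →+ (ℕ →₀ R) where
  toFun := toFinsupp
  map_zero' := rfl
  map_add' := fun _ _ => rfl

instance instModule : Module k (NUPoly R) :=
  Function.Injective.module k toFinsuppAddHom toFinsupp_injective fun _ _ => rfl

end Module

section Scalars

variable (k : Type*) [CommRing k] [Module k R]

instance instIsScalarTower [IsScalarTower k R R] :
    IsScalarTower k (NUPoly R) (NUPoly R) := by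
  refine ⟨fun c p q => ?_⟩
  rw [smul_eq_mul, smul_eq_mul]
  apply toFinsupp_injective
  simp only [toFinsupp_mul, toFinsupp_smul]
  rw [mulF, mulF, Finsupp.sum_smul_index' (by simp), Finsupp.smul_sum]
  refine Finsupp.sum_congr fun i _ => ?_
  rw [Finsupp.smul_sum]
  refine Finsupp.sum_congr fun j _ => ?_
  rw [smul_mul_assoc, Finsupp.smul_single]

instance instSMulCommClass [SMulCommClass k R R] :
    SMulCommClass k (NUPoly R) (NUPoly R) := by
  refine ⟨fun c p q => ?_⟩
  rw [smul_eq_mul, smul_eq_mul]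
  apply toFinsupp_injective
  simp only [toFinsupp_mul, toFinsupp_smul]
  rw [mulF, mulF, Finsupp.smul_sum]
  refine Finsupp.sum_congr fun i _ => ?_
  rw [Finsupp.sum_smul_index' (by simp), Finsupp.smul_sum]
  refine Finsupp.sum_congr fun j _ => ?_
  rw [mul_smul_comm, Finsupp.smul_single]

end Scalars

/-- The non-unital polynomial `r·xⁱ`. -/
def single (i : ℕ) (a : R) : NUPoly R := ⟨Finsupp.single i a⟩

/-- Evaluation at `x = 0` (the constant coefficient), as a non-unital algebra
homomorphism `∂⁰ : R[x] → R`. -/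
def atZero (k R : Type*) [CommRing k] [NonUnitalRing R] [Module k R] :
    NUPoly R →ₙₐ[k] R where
  toFun p := p.toFinsupp 0
  map_add' p q := by
    show (p + q).toFinsupp 0 = p.toFinsupp 0 + q.toFinsupp 0
    rw [toFinsupp_add, Finsupp.add_apply]
  map_smul' c p := by
    show (c • p).toFinsupp 0 = c • p.toFinsupp 0
    rw [toFinsupp_smul, Finsupp.smul_apply]
  map_zero' := rfl
  map_mul' p q := by
    show (p * q).toFinsupp 0 = p.toFinsupp 0 * q.toFinsupp 0
    rw [mul_apply, Finset.HasAntidiagonal.antidiagonal_zero, Finset.sum_singleton]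

/-- Evaluation at `x = 1` (the sum of the coefficients), as a non-unital algebra
homomorphism `∂¹ : R[x] → R`. -/
def coeffSum (k R : Type*) [CommRing k] [NonUnitalRing R] [Module k R] :
    NUPoly R →ₙₐ[k] R where
  toFun p := p.toFinsupp.sum fun _ a => a
  map_add' p q := by
    show ((p + q).toFinsupp.sum fun _ a => a)
      = (p.toFinsupp.sum fun _ a => a) + q.toFinsupp.sum fun _ a => a
    rw [toFinsupp_add]
    exact Finsupp.sum_add_index' (fun _ => rfl) (fun _ _ _ => rfl)
  map_smul' c p := by
    show ((c • p).toFinsupp.sum fun _ a => a) = c • p.toFinsupp.sum fun _ a => a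
    rw [toFinsupp_smul]
    have h1 : ((c • p.toFinsupp).sum fun _ a => a) = p.toFinsupp.sum fun _ a => c • a :=
      Finsupp.sum_smul_index' (h := fun (_ : ℕ) (a : R) => a) (fun _ => rfl)
    have h2 : (c • p.toFinsupp.sum fun _ a => a) = p.toFinsupp.sum fun _ a => c • a :=
      Finsupp.smul_sum
    rw [h1, h2]
  map_zero' := by
    show ((0 : NUPoly R).toFinsupp.sum fun _ a => a) = 0
    rw [toFinsupp_zero]
    exact Finsupp.sum_zero_index
  map_mul' p q := by
    classical
    show ((p * q).toFinsupp.sum fun _ a => a)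
      = (p.toFinsupp.sum fun _ a => a) * q.toFinsupp.sum fun _ a => a
    rw [mul_def, Finsupp.sum_sum_index (fun _ => rfl) (fun _ _ _ => rfl)]
    have h1 : (p.toFinsupp.sum fun i a =>
          (q.toFinsupp.sum fun j b => Finsupp.single (i + j) (a * b)).sum fun _ c => c)
        = p.toFinsupp.sum fun i a => q.toFinsupp.sum fun j b => a * b := by
      refine Finsupp.sum_congr fun i _ => ?_
      rw [Finsupp.sum_sum_index (fun _ => rfl) (fun _ _ _ => rfl)]
      exact Finsupp.sum_congr fun j _ => Finsupp.sum_single_index rfl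
    have h2 : (p.toFinsupp.sum fun i a => q.toFinsupp.sum fun j b => a * b)
        = p.toFinsupp.sum fun i a => a * q.toFinsupp.sum fun _ b => b :=
      Finsupp.sum_congr fun i _ => (Finsupp.mul_sum _ _).symm
    rw [h1, h2, ← Finsupp.sum_mul]

@[simp] theorem atZero_apply (k : Type*) [CommRing k] [Module k R] (p : NUPoly R) :
    atZero k R p = p.toFinsupp 0 := rfl

@[simp] theorem coeffSum_apply (k : Type*) [CommRing k] [Module k R] (p : NUPoly R) :
    coeffSum k R p = p.toFinsupp.sum fun _ a => a := rfl

end NUPoly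

section Homotopy

variable (k : Type*) [CommRing k]
variable {A B : Type*} [NonUnitalRing A] [Module k A] [NonUnitalRing B] [Module k B]

/-- Two non-unital algebra homomorphisms `f₀ f₁ : A → B` are *elementary homotopic*
if there is a homomorphism `H : A → B[x]` with `∂⁰ ∘ H = f₀` and `∂¹ ∘ H = f₁`. -/
def ElemHomotopic (f₀ f₁ : A →ₙₐ[k] B) : Prop :=
  ∃ H : A →ₙₐ[k] NUPoly B,
    (NUPoly.atZero k B).comp H = f₀ ∧ (NUPoly.coeffSum k B).comp H = f₁

/-- *Homotopy* of non-unital algebra homomorphisms: the equivalence relation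
generated by elementary homotopy. -/
def NUHomotopic (f₀ f₁ : A →ₙₐ[k] B) : Prop :=
  Relation.EqvGen (ElemHomotopic k) f₀ f₁

end Homotopy

section TensorUnitization

variable (k : Type*) [CommRing k]

/-- `γ_u` : for a `k`-linear map `u : C → B` into a non-unital `k`-algebra `B`,
the unique `k`-algebra homomorphism `TensorAlgebra k C → Unitization k B` with
`γ_u (ι c) = inr (u c)`. -/
noncomputable def gammaMap {B C : Type*}
    [NonUnitalRing B] [Module k B] [SMulCommClass k B B] [IsScalarTower k B B]
    [NonUnitalRing C] [Module k C]
    (u : C →ₗ[k] B) : TensorAlgebra k C →ₐ[k] Unitization k B :=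
  TensorAlgebra.lift k ((Unitization.inrHom k k B).comp u)

/-- `η_C := γ_{id C}` : the canonical `k`-algebra homomorphism
`TensorAlgebra k C → Unitization k C`. -/
noncomputable def etaHom (C : Type*)
    [NonUnitalRing C] [Module k C] [SMulCommClass k C C] [IsScalarTower k C C] :
    TensorAlgebra k C →ₐ[k] Unitization k C :=
  gammaMap k (LinearMap.id (R := k) (M := C))

/-- `J(C) := ker η_C`, the ideal of the universal extension
`J(C) → T(C) → C`, as a non-unital subalgebra of the tensor algebra. -/
noncomputable def jIdeal (C : Type*)
    [NonUnitalRing C] [Module k C] [SMulCommClass k C C] [IsScalarTower k C C] :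
    NonUnitalSubalgebra k (TensorAlgebra k C) where
  carrier := {a | etaHom k C a = 0}
  add_mem' := fun {p q} hp hq => by
    simp only [Set.mem_setOf_eq] at *
    rw [map_add, hp, hq, add_zero]
  zero_mem' := by simp only [Set.mem_setOf_eq, map_zero]
  mul_mem' := fun {p q} hp hq => by
    simp only [Set.mem_setOf_eq] at *
    rw [map_mul, hp, zero_mul]
  smul_mem' := fun c p hp => by
    simp only [Set.mem_setOf_eq] at *
    rw [map_smul, hp, smul_zero]

/-- The kernel of a non-unital algebra homomorphism, as a non-unital
subalgebra. -/
noncomputable def nuaKer {B C : Type*}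
    [NonUnitalRing B] [Module k B] [NonUnitalRing C] [Module k C]
    (α : B →ₙₐ[k] C) : NonUnitalSubalgebra k B where
  carrier := {b | α b = 0}
  add_mem' := fun {p q} hp hq => by
    simp only [Set.mem_setOf_eq] at *
    rw [map_add, hp, hq, add_zero]
  zero_mem' := by simp only [Set.mem_setOf_eq, map_zero]
  mul_mem' := fun {p q} hp hq => by
    simp only [Set.mem_setOf_eq] at *
    rw [map_mul, hp, zero_mul]
  smul_mem' := fun c p hp => by
    simp only [Set.mem_setOf_eq] at *
    rw [map_smul, hp, smul_zero]

/-- The functorial extension of a non-unital algebra homomorphism `φ : B → C`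
to unitizations, `Unitization k B → Unitization k C` (with
`inr b ↦ inr (φ b)`). -/
noncomputable def unitizationMap {B C : Type*}
    [NonUnitalRing B] [Module k B] [SMulCommClass k B B] [IsScalarTower k B B]
    [NonUnitalRing C] [Module k C] [SMulCommClass k C C] [IsScalarTower k C C]
    (φ : B →ₙₐ[k] C) : Unitization k B →ₐ[k] Unitization k C :=
  Unitization.lift ((Unitization.inrNonUnitalAlgHom k C).comp φ)

end TensorUnitization

set_option maxHeartbeats 2000000 in
/-- Let `α : B → C` be a surjective non-unital `k`-algebra
homomorphism and `β, γ : C → B` two `k`-linear splittings of `α`, with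
classifying maps `ξ_β, ξ_γ : J(C) → ker α`.  Let
`Ū : TensorAlgebra k C → Polynomial (Unitization k B)` be the unique
`k`-algebra homomorphism with `Ū (ι c) = C (inr (β c)) + C (inr (γ c - β c)) · X`.
Then:
(i) `Polynomial.map (Unitization.map α) ∘ Ū = Polynomial.C ∘ η_C`;
(ii) evaluation at `X = 0` composed with `Ū` equals `γ_β`, and evaluation at
`X = 1` composed with `Ū` equals `γ_γ`.  Consequently, for every `a ∈ J(C)`
all coefficients of `Ū a` lie in `inr (ker α)`, and `Ū` realizes an elementary
polynomial homotopy between the classifying maps `ξ_β` and `ξ_γ`; i.e. the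
classifying map of a `k`-split extension is unique up to elementary
homotopy. -/
theorem classifying_map_unique_up_to_elementary_homotopy
    (k : Type*) [CommRing k] {B C : Type*}
    [NonUnitalRing B] [Module k B] [SMulCommClass k B B] [IsScalarTower k B B]
    [NonUnitalRing C] [Module k C] [SMulCommClass k C C] [IsScalarTower k C C]
    (α : B →ₙₐ[k] C) (hα : Function.Surjective α)
    (β γ : C →ₗ[k] B) (hβ : ∀ c : C, α (β c) = c) (hγ : ∀ c : C, α (γ c) = c)
    -- the classifying maps
    (ξβ ξγ : jIdeal k C →ₙₐ[k] nuaKer k α)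
    (hξβ : ∀ a : jIdeal k C,
      (Unitization.inr ((ξβ a : B)) : Unitization k B)
        = gammaMap k β (a : TensorAlgebra k C))
    (hξγ : ∀ a : jIdeal k C,
      (Unitization.inr ((ξγ a : B)) : Unitization k B)
        = gammaMap k γ (a : TensorAlgebra k C)) :
    -- existence and uniqueness of `Ū`
    (∃! U : TensorAlgebra k C →ₐ[k] Polynomial (Unitization k B),
      ∀ c : C, U (TensorAlgebra.ι k c)
        = Polynomial.C (Unitization.inr (β c))
          + Polynomial.C (Unitization.inr (γ c - β c)) * Polynomial.X) ∧
    -- and its properties: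
    ∀ Ubar : TensorAlgebra k C →ₐ[k] Polynomial (Unitization k B),
      (∀ c : C, Ubar (TensorAlgebra.ι k c)
        = Polynomial.C (Unitization.inr (β c))
          + Polynomial.C (Unitization.inr (γ c - β c)) * Polynomial.X) →
      -- (i)
      (∀ a : TensorAlgebra k C,
        Polynomial.map (unitizationMap k α).toRingHom (Ubar a)
          = Polynomial.C (etaHom k C a)) ∧
      -- (ii)
      (∀ a : TensorAlgebra k C, (Ubar a).coeff 0 = gammaMap k β a) ∧
      (∀ a : TensorAlgebra k C, (Ubar a).eval 1 = gammaMap k γ a) ∧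
      -- the coefficients of `Ū a` lie in `inr (ker α)` for `a ∈ J(C)`
      (∀ a : TensorAlgebra k C, etaHom k C a = 0 → ∀ i : ℕ,
        ∃ x : B, α x = 0 ∧ (Ubar a).coeff i = Unitization.inr x) ∧
      -- `Ū` realizes an elementary homotopy between `ξ_β` and `ξ_γ`
      ∃ H : jIdeal k C →ₙₐ[k] NUPoly (nuaKer k α),
        (∀ (a : jIdeal k C) (i : ℕ),
          (Unitization.inr (((H a).toFinsupp i : nuaKer k α) : B) : Unitization k B)
            = (Ubar (a : TensorAlgebra k C)).coeff i) ∧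
        (NUPoly.atZero k (nuaKer k α)).comp H = ξβ ∧
        (NUPoly.coeffSum k (nuaKer k α)).comp H = ξγ := by
  classical
  -- the defining linear map for `Ū`
  let L : C →ₗ[k] Polynomial (Unitization k B) :=
    { toFun := fun c => Polynomial.C (Unitization.inr (β c))
        + Polynomial.C (Unitization.inr (γ c - β c)) * Polynomial.X
      map_add' := fun c c' => by
        simp only [map_add]
        rw [show γ c + γ c' - (β c + β c') = (γ c - β c) + (γ c' - β c') by abel]
        simp only [Unitization.inr_add, map_add, add_mul]
        abel
      map_smul' := fun s c => by
        simp only [map_smul, RingHom.id_apply]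
        simp only [← smul_sub, Unitization.inr_smul, ← Polynomial.smul_C,
          smul_mul_assoc, ← smul_add] }
  have hL : ∀ c : C, L c = Polynomial.C (Unitization.inr (β c))
      + Polynomial.C (Unitization.inr (γ c - β c)) * Polynomial.X := fun _ => rfl
  have hUmap_inr : ∀ b : B,
      unitizationMap k α (Unitization.inr b) = Unitization.inr (α b) := by
    intro b
    simp [unitizationMap]
  have hUmap_fst : ∀ x : Unitization k B, (unitizationMap k α x).fst = x.fst := by
    intro x
    simp [unitizationMap, Unitization.algebraMap_eq_inl]
  have hUmap_snd : ∀ x : Unitization k B, (unitizationMap k α x).snd = α x.snd := by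
    intro x
    simp [unitizationMap, Unitization.algebraMap_eq_inl]
  constructor
  · refine ⟨TensorAlgebra.lift k L, fun c => ?_, fun V hV => ?_⟩
    · rw [TensorAlgebra.lift_ι_apply]
      exact hL c
    · apply TensorAlgebra.hom_ext
      apply LinearMap.ext
      intro c
      simp only [LinearMap.comp_apply, AlgHom.toLinearMap_apply]
      rw [hV c, TensorAlgebra.lift_ι_apply]
      exact (hL c).symm
  intro Ubar hU
  -- (i)
  have hmapC : (Polynomial.mapAlgHom (unitizationMap k α)).comp Ubar
      = (Polynomial.CAlgHom (R := k)).comp (etaHom k C) := by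
    apply TensorAlgebra.hom_ext
    apply LinearMap.ext
    intro c
    simp only [LinearMap.comp_apply, AlgHom.toLinearMap_apply, AlgHom.comp_apply]
    rw [hU c]
    simp only [Polynomial.coe_mapAlgHom, Polynomial.map_add, Polynomial.map_mul,
      Polynomial.map_C, Polynomial.map_X]
    rw [show ((unitizationMap k α : Unitization k B →ₐ[k] Unitization k C) :
        Unitization k B →+* Unitization k C) (Unitization.inr (β c))
        = Unitization.inr (α (β c)) from hUmap_inr (β c)]
    rw [show ((unitizationMap k α : Unitization k B →ₐ[k] Unitization k C) :
        Unitization k B →+* Unitization k C) (Unitization.inr (γ c - β c))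
        = Unitization.inr (α (γ c - β c)) from hUmap_inr _]
    rw [map_sub, hβ c, hγ c, sub_self, Unitization.inr_zero, map_zero, zero_mul, add_zero]
    rw [show etaHom k C (TensorAlgebra.ι k c) = Unitization.inr c from ?_]
    · rfl
    · rw [etaHom, gammaMap, TensorAlgebra.lift_ι_apply]
      rfl
  have hi : ∀ a : TensorAlgebra k C,
      Polynomial.map (unitizationMap k α).toRingHom (Ubar a)
        = Polynomial.C (etaHom k C a) := by
    intro a
    have := DFunLike.congr_fun hmapC a
    simpa [Polynomial.coe_mapAlgHom] using this
  -- evaluation homomorphisms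
  let E0 : Polynomial (Unitization k B) →ₐ[k] Unitization k B :=
    Polynomial.eval₂AlgHom (AlgHom.id k _) 0 fun _ => Commute.zero_right _
  let E1 : Polynomial (Unitization k B) →ₐ[k] Unitization k B :=
    Polynomial.eval₂AlgHom (AlgHom.id k _) 1 fun _ => Commute.one_right _
  have hE0 : ∀ p : Polynomial (Unitization k B), E0 p = p.eval 0 := fun p => rfl
  have hE1 : ∀ p : Polynomial (Unitization k B), E1 p = p.eval 1 := fun p => rfl
  have hgβ : ∀ c : C, gammaMap k β (TensorAlgebra.ι k c) = Unitization.inr (β c) := by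
    intro c
    rw [gammaMap, TensorAlgebra.lift_ι_apply]
    rfl
  have hgγ : ∀ c : C, gammaMap k γ (TensorAlgebra.ι k c) = Unitization.inr (γ c) := by
    intro c
    rw [gammaMap, TensorAlgebra.lift_ι_apply]
    rfl
  have h0comp : E0.comp Ubar = gammaMap k β := by
    apply TensorAlgebra.hom_ext
    apply LinearMap.ext
    intro c
    simp only [LinearMap.comp_apply, AlgHom.toLinearMap_apply, AlgHom.comp_apply]
    rw [hU c, hE0, hgβ c]
    simp
  have h1comp : E1.comp Ubar = gammaMap k γ := by
    apply TensorAlgebra.hom_ext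
    apply LinearMap.ext
    intro c
    simp only [LinearMap.comp_apply, AlgHom.toLinearMap_apply, AlgHom.comp_apply]
    rw [hU c, hE1, hgγ c]
    simp [← Unitization.inr_add]
  have h0 : ∀ a : TensorAlgebra k C, (Ubar a).coeff 0 = gammaMap k β a := by
    intro a
    rw [Polynomial.coeff_zero_eq_eval_zero, ← hE0]
    exact DFunLike.congr_fun h0comp a
  have h1 : ∀ a : TensorAlgebra k C, (Ubar a).eval 1 = gammaMap k γ a := by
    intro a
    rw [← hE1]
    exact DFunLike.congr_fun h1comp a
  -- coefficients lie in `inr (ker α)`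
  have hcoeff : ∀ a : TensorAlgebra k C, etaHom k C a = 0 → ∀ i : ℕ,
      α (((Ubar a).coeff i).snd) = 0
        ∧ (Ubar a).coeff i = Unitization.inr (((Ubar a).coeff i).snd) := by
    intro a ha i
    have hz : unitizationMap k α ((Ubar a).coeff i) = 0 := by
      have h := congrArg (fun p => Polynomial.coeff p i) (hi a)
      simp only [Polynomial.coeff_map, ha, map_zero, Polynomial.coeff_zero] at h
      exact h
    constructor
    · have := hUmap_snd ((Ubar a).coeff i)
      rw [hz] at this
      simpa using this.symm
    · have hfst := hUmap_fst ((Ubar a).coeff i)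
      rw [hz] at hfst
      have hx := (Unitization.inl_fst_add_inr_snd_eq ((Ubar a).coeff i)).symm
      rw [hx, ← hfst]
      simp
  refine ⟨hi, h0, h1, fun a ha i => ⟨_, (hcoeff a ha i).1, (hcoeff a ha i).2⟩, ?_⟩
  -- elementary homotopy
  have hmem : ∀ a : jIdeal k C, etaHom k C (a : TensorAlgebra k C) = 0 := fun a => a.2
  have hkerJ : ∀ (a : jIdeal k C) (n : ℕ),
      α (((Ubar (a : TensorAlgebra k C)).coeff n).snd) = 0 :=
    fun a n => (hcoeff _ (hmem a) n).1
  have hrepr : ∀ (a : jIdeal k C) (n : ℕ),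
      (Ubar (a : TensorAlgebra k C)).coeff n
        = Unitization.inr (((Ubar (a : TensorAlgebra k C)).coeff n).snd) :=
    fun a n => (hcoeff _ (hmem a) n).2
  let F : jIdeal k C → (ℕ →₀ nuaKer k α) := fun a =>
    ⟨(Ubar (a : TensorAlgebra k C)).support,
      fun n => ⟨((Ubar (a : TensorAlgebra k C)).coeff n).snd, hkerJ a n⟩,
      by
        intro n
        rw [Polynomial.mem_support_iff]
        constructor
        · intro h hc
          apply h
          rw [hrepr a n, show ((Ubar (a : TensorAlgebra k C)).coeff n).snd = 0 from ?_,
            Unitization.inr_zero]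
          have := congrArg Subtype.val hc
          simpa using this
        · intro h hc
          apply h
          apply Subtype.ext
          show ((Ubar (a : TensorAlgebra k C)).coeff n).snd = _
          rw [hc]
          simp⟩
  have hFinr : ∀ (a : jIdeal k C) (n : ℕ),
      (Unitization.inr ((F a n : B)) : Unitization k B)
        = (Ubar (a : TensorAlgebra k C)).coeff n :=
    fun a n => (hrepr a n).symm
  have hinj : ∀ x y : nuaKer k α,
      (Unitization.inr (x : B) : Unitization k B) = Unitization.inr (y : B) → x = y :=
    fun x y h => Subtype.ext (Unitization.inr_injective h)
  have hsum : ∀ {ι : Type} (s : Finset ι) (g : ι → nuaKer k α),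
      (Unitization.inr ((∑ x ∈ s, g x : nuaKer k α) : B) : Unitization k B)
        = ∑ x ∈ s, (Unitization.inr ((g x : B)) : Unitization k B) := by
    intro ι s g
    rw [AddSubmonoidClass.coe_finset_sum]
    exact map_sum (Unitization.inrHom k k B) _ s
  let H : jIdeal k C →ₙₐ[k] NUPoly (nuaKer k α) :=
    { toFun := fun a => ⟨F a⟩
      map_add' := fun a b => by
        apply NUPoly.toFinsupp_injective
        show F (a + b) = (⟨F a⟩ + ⟨F b⟩ : NUPoly (nuaKer k α)).toFinsupp
        rw [NUPoly.toFinsupp_add]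
        ext n
        apply Unitization.inr_injective (R := k)
        rw [Finsupp.add_apply]
        calc (Unitization.inr ((F (a + b) n : B)) : Unitization k B)
            = (Ubar ((a + b : jIdeal k C) : TensorAlgebra k C)).coeff n := hFinr _ n
          _ = (Ubar ((a : TensorAlgebra k C) + (b : TensorAlgebra k C))).coeff n := by
              norm_cast
          _ = (Ubar (a : TensorAlgebra k C)).coeff n
              + (Ubar (b : TensorAlgebra k C)).coeff n := by
              rw [map_add, Polynomial.coeff_add]
          _ = Unitization.inr ((F a n : B)) + Unitization.inr ((F b n : B)) := by
              rw [hFinr, hFinr]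
          _ = Unitization.inr (((F a n + F b n : nuaKer k α) : B)) := by
              rw [← Unitization.inr_add]
              norm_cast
      map_zero' := by
        apply NUPoly.toFinsupp_injective
        show F 0 = (0 : ℕ →₀ nuaKer k α)
        ext n
        apply Unitization.inr_injective (R := k)
        rw [Finsupp.zero_apply]
        calc (Unitization.inr ((F 0 n : B)) : Unitization k B)
            = (Ubar ((0 : jIdeal k C) : TensorAlgebra k C)).coeff n := hFinr _ n
          _ = 0 := by
              rw [show ((0 : jIdeal k C) : TensorAlgebra k C) = 0 from rfl, map_zero,
                Polynomial.coeff_zero]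
          _ = Unitization.inr (((0 : nuaKer k α) : B)) := by norm_cast
      map_smul' := fun s a => by
        apply NUPoly.toFinsupp_injective
        show F (s • a) = (s • (⟨F a⟩ : NUPoly (nuaKer k α))).toFinsupp
        rw [NUPoly.toFinsupp_smul]
        ext n
        apply Unitization.inr_injective (R := k)
        rw [Finsupp.smul_apply]
        calc (Unitization.inr ((F (s • a) n : B)) : Unitization k B)
            = (Ubar ((s • a : jIdeal k C) : TensorAlgebra k C)).coeff n := hFinr _ n
          _ = (Ubar (s • (a : TensorAlgebra k C))).coeff n := by norm_cast
          _ = s • (Ubar (a : TensorAlgebra k C)).coeff n := by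
              rw [map_smul, Polynomial.coeff_smul]
          _ = s • (Unitization.inr ((F a n : B)) : Unitization k B) := by rw [hFinr]
          _ = Unitization.inr (((s • F a n : nuaKer k α) : B)) := by
              rw [← Unitization.inr_smul]
              norm_cast
      map_mul' := fun a b => by
        apply NUPoly.toFinsupp_injective
        show F (a * b) = (⟨F a⟩ * ⟨F b⟩ : NUPoly (nuaKer k α)).toFinsupp
        ext n
        apply Unitization.inr_injective (R := k)
        rw [show ((⟨F a⟩ * ⟨F b⟩ : NUPoly (nuaKer k α)).toFinsupp n)
            = ∑ x ∈ Finset.HasAntidiagonal.antidiagonal n, F a x.1 * F b x.2 from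
          NUPoly.mul_apply ⟨F a⟩ ⟨F b⟩ n]
        calc (Unitization.inr ((F (a * b) n : B)) : Unitization k B)
            = (Ubar ((a * b : jIdeal k C) : TensorAlgebra k C)).coeff n := hFinr _ n
          _ = (Ubar ((a : TensorAlgebra k C) * (b : TensorAlgebra k C))).coeff n := by
              norm_cast
          _ = ∑ x ∈ Finset.HasAntidiagonal.antidiagonal n,
              (Ubar (a : TensorAlgebra k C)).coeff x.1
                * (Ubar (b : TensorAlgebra k C)).coeff x.2 := by
              rw [map_mul, Polynomial.coeff_mul]
          _ = ∑ x ∈ Finset.HasAntidiagonal.antidiagonal n,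
              (Unitization.inr (((F a x.1 * F b x.2 : nuaKer k α) : B)) :
                Unitization k B) := by
              refine Finset.sum_congr rfl fun x _ => ?_
              rw [← hFinr a, ← hFinr b, ← Unitization.inr_mul]
              norm_cast
          _ = Unitization.inr ((∑ x ∈ Finset.HasAntidiagonal.antidiagonal n,
              F a x.1 * F b x.2 : nuaKer k α) : B) := (hsum _ _).symm }
  refine ⟨H, fun a i => hFinr a i, ?_, ?_⟩
  · apply NonUnitalAlgHom.ext
    intro a
    apply hinj
    show (Unitization.inr ((F a 0 : B)) : Unitization k B) = _
    rw [hFinr a 0, h0, ← hξβ a]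
  · apply NonUnitalAlgHom.ext
    intro a
    apply hinj
    show (Unitization.inr (((F a).sum fun _ x => x : nuaKer k α) : B) : Unitization k B)
        = _
    rw [Finsupp.sum, hsum]
    have hev : (Ubar (a : TensorAlgebra k C)).eval 1
        = ∑ n ∈ (Ubar (a : TensorAlgebra k C)).support,
            (Ubar (a : TensorAlgebra k C)).coeff n := by
      rw [Polynomial.eval_eq_sum, Polynomial.sum_def]
      simp
    calc (∑ n ∈ (F a).support, (Unitization.inr ((F a n : B)) : Unitization k B))
        = ∑ n ∈ (Ubar (a : TensorAlgebra k C)).support,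
            (Ubar (a : TensorAlgebra k C)).coeff n :=
          Finset.sum_congr rfl fun n _ => hFinr a n
      _ = (Ubar (a : TensorAlgebra k C)).eval 1 := hev.symm
      _ = gammaMap k γ (a : TensorAlgebra k C) := h1 _
      _ = Unitization.inr ((ξγ a : B)) := (hξγ a).symm
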